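/- With P = (1/2^p) e_1⋯e_p f_p⋯f_1 as above, the map a ↦ P a P restricted to the subalgebra Cl(𝔞) ⊂ Cl(𝔭) is an injective (ℤ₂-graded) algebra homomorphism onto P·Cl(𝔞)·P; in particular, P commutes with every element of Cl(𝔞), P a P = aP for a ∈ Cl(𝔞), and the Harish-Chandra projection HC : Cl(𝔭) → Cl(𝔞) along 𝔭⁻Cl(𝔭) + Cl(𝔭)𝔭⁺ satisfies HC(a) = a for a ∈ Cl(𝔞). -/

import Mathlib

namespace Stmt16Aux

open CliffordAlgebra

variable {P : Type*} [AddCommGroup P] [Module ℂ P] (B : LinearMap.BilinForm ℂ P)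

local notation "QB" => LinearMap.BilinMap.toQuadraticMap B
local notation "ιQ" => CliffordAlgebra.ι (LinearMap.BilinMap.toQuadraticMap B)
local notation "ctr" => @CliffordAlgebra.contractLeft _ _ _ _ _ (LinearMap.BilinMap.toQuadraticMap B)

lemma anticomm {v w : P} (h1 : B v w = 0) (h2 : B w v = 0) :
    ιQ v * ιQ w = -(ιQ w * ιQ v) := by
  have h := CliffordAlgebra.ι_mul_ι_add_swap (Q := QB) v w
  rw [LinearMap.BilinMap.polar_toQuadraticMap, h1, h2, add_zero, map_zero] at h
  exact eq_neg_of_add_eq_zero_left h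

lemma sq_zero {v : P} (h : B v v = 0) : ιQ v * ιQ v = 0 := by
  rw [CliffordAlgebra.ι_sq_scalar, LinearMap.BilinMap.toQuadraticMap_apply, h, map_zero]

lemma prod_mul_anticomm (v : P) (l : List P) (h : ∀ x ∈ l, B x v = 0 ∧ B v x = 0) :
    (l.map ιQ).prod * ιQ v = ((-1 : ℂ) ^ l.length) • (ιQ v * (l.map ιQ).prod) := by
  induction l with
  | nil => simp
  | cons x t ih =>
    have hx := h x (by simp)
    have ht := ih (fun y hy => h y (by simp [hy]))
    simp only [List.map_cons, List.prod_cons, List.length_cons]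
    rw [mul_assoc, ht, mul_smul_comm, ← mul_assoc, anticomm B hx.1 hx.2, neg_mul, smul_neg,
      pow_succ, mul_neg_one, neg_smul]
    simp [mul_assoc]

lemma mem_mul_prod_zero (l : List P) (h : ∀ x ∈ l, ∀ y ∈ l, B x y = 0)
    {v : P} (hv : v ∈ l) : ιQ v * (l.map ιQ).prod = 0 := by
  induction l with
  | nil => simp at hv
  | cons x t ih =>
    simp only [List.map_cons, List.prod_cons]
    rcases List.mem_cons.mp hv with rfl | hvt
    · rw [← mul_assoc, sq_zero B (h v (by simp) v (by simp)), zero_mul]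
    · rw [← mul_assoc, anticomm B (h v hv x (by simp)) (h x (by simp) v hv), neg_mul,
        mul_assoc, ih (fun a ha b hb => h a (by simp [ha]) b (by simp [hb])) hvt,
        mul_zero, neg_zero]

lemma prod_mul_mem_zero (l : List P) (h : ∀ x ∈ l, ∀ y ∈ l, B x y = 0)
    {v : P} (hv : v ∈ l) : (l.map ιQ).prod * ιQ v = 0 := by
  induction l with
  | nil => simp at hv
  | cons x t ih =>
    simp only [List.map_cons, List.prod_cons]
    by_cases hvt : v ∈ t
    · rw [mul_assoc, ih (fun a ha b hb => h a (by simp [ha]) b (by simp [hb])) hvt, mul_zero]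
    · have hvx : v = x := by rcases List.mem_cons.mp hv with rfl | hvt' <;> tauto
      subst hvx
      rw [mul_assoc, prod_mul_anticomm B v t
        (fun y hy => ⟨h y (by simp [hy]) v (by simp), h v (by simp) y (by simp [hy])⟩),
        mul_smul_comm, ← mul_assoc, sq_zero B (h v (by simp) v (by simp)), zero_mul, smul_zero]

lemma pi_comm (u w v : P) (h1 : B u v = 0) (h1' : B v u = 0) (h2 : B w v = 0) (h2' : B v w = 0) :
    Commute (ιQ u * ιQ w) (ιQ v) := by
  show _ * _ = _ * _
  rw [mul_assoc, anticomm B h2 h2', mul_neg, ← mul_assoc, anticomm B h1 h1', neg_mul, neg_neg,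
    mul_assoc]

lemma pi_sq (u w : P) (huw : B u w = 1) (hwu : B w u = 1) (hu : B u u = 0) (hw : B w w = 0) :
    (ιQ u * ιQ w) * (ιQ u * ιQ w) = (2 : ℂ) • (ιQ u * ιQ w) := by
  have h := CliffordAlgebra.ι_mul_ι_comm (Q := QB) w u
  rw [LinearMap.BilinMap.polar_toQuadraticMap, hwu, huw] at h
  have hww := sq_zero B hw
  calc ιQ u * ιQ w * (ιQ u * ιQ w)
      = ιQ u * ((ιQ w * ιQ u) * ιQ w) := by rw [mul_assoc, mul_assoc]
    _ = ιQ u * ((algebraMap ℂ _ (1 + 1)) * ιQ w) - ιQ u * (ιQ u * (ιQ w * ιQ w)) := by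
        rw [h, sub_mul, mul_sub]; rw [mul_assoc (ι QB u)]
    _ = (2 : ℂ) • (ιQ u * ιQ w) := by
        have h2 : ((1:ℂ) + 1) = 2 := by norm_num
        rw [hww, mul_zero, mul_zero, sub_zero, h2, Algebra.smul_def, ← mul_assoc, ← mul_assoc,
          Algebra.commutes]


section Pi

variable {p : ℕ} (e f : Fin p → P)
variable (he : ∀ i j, B (e i) (e j) = 0) (hf : ∀ i j, B (f i) (f j) = 0)
variable (hef : ∀ i j, B (e i) (f j) = if i = j then 1 else 0)
variable (hfe : ∀ i j, B (f i) (e j) = if i = j then 1 else 0)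

/-- the pair product `e_i f_i` -/
noncomputable def pp (i : Fin p) : CliffordAlgebra QB := ιQ (e i) * ιQ (f i)

include he hf hef hfe in
lemma comm_pp_iota {i j : Fin p} (hij : i ≠ j) : Commute (pp B e f i) (ιQ (e j)) := by
  refine pi_comm B _ _ _ (he i j) (he j i) ?_ ?_
  · rw [hfe i j]; simp [hij]
  · rw [hef j i]; simp [Ne.symm hij]

include he hf hef hfe in
lemma comm_pp_iotaf {i j : Fin p} (hij : i ≠ j) : Commute (pp B e f i) (ιQ (f j)) := by
  refine pi_comm B _ _ _ ?_ ?_ (hf i j) (hf j i)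
  · rw [hef i j]; simp [hij]
  · rw [hfe j i]; simp [Ne.symm hij]

include he hf hef hfe in
lemma comm_pp_pp {i j : Fin p} (hij : i ≠ j) : Commute (pp B e f i) (pp B e f j) :=
  (comm_pp_iota B e f he hf hef hfe hij).mul_right (comm_pp_iotaf B e f he hf hef hfe hij)

include he hf hef hfe in
lemma pp_sq (i : Fin p) : pp B e f i * pp B e f i = (2 : ℂ) • pp B e f i := by
  refine pi_sq B _ _ ?_ ?_ (he i i) (hf i i)
  · rw [hef i i]; simp
  · rw [hfe i i]; simp

include he hf hef hfe in
lemma EF_eq_prodpp (l : List (Fin p)) (hl : l.Nodup) :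
    ((l.map fun i => ιQ (e i)).prod) * ((l.reverse.map fun i => ιQ (f i)).prod)
      = (l.map (pp B e f)).prod := by
  induction l with
  | nil => simp
  | cons x t ih =>
    have hxt : x ∉ t := (List.nodup_cons.mp hl).1
    have ht : t.Nodup := (List.nodup_cons.mp hl).2
    have hcE : Commute ((t.map (pp B e f)).prod) (ιQ (e x)) := by
      refine Commute.list_prod_left _ _ fun y hy => ?_
      obtain ⟨j, hj, rfl⟩ := List.mem_map.mp hy
      exact comm_pp_iota B e f he hf hef hfe (fun h => hxt (h ▸ hj))
    have hcF : Commute ((t.map (pp B e f)).prod) (ιQ (f x)) := by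
      refine Commute.list_prod_left _ _ fun y hy => ?_
      obtain ⟨j, hj, rfl⟩ := List.mem_map.mp hy
      exact comm_pp_iotaf B e f he hf hef hfe (fun h => hxt (h ▸ hj))
    simp only [List.map_cons, List.prod_cons, List.reverse_cons, List.map_append,
      List.prod_append, List.map_nil, List.prod_nil, mul_one, List.map_singleton,
      List.prod_singleton]
    rw [mul_assoc, ← mul_assoc ((t.map fun i => ιQ (e i)).prod), ih ht, hcF.eq, ← mul_assoc]
    rfl

include he hf hef hfe in
lemma prodpp_sq (l : List (Fin p)) (hl : l.Nodup) :
    (l.map (pp B e f)).prod * (l.map (pp B e f)).prod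
      = ((2 : ℂ) ^ l.length) • (l.map (pp B e f)).prod := by
  induction l with
  | nil => simp
  | cons x t ih =>
    have hxt : x ∉ t := (List.nodup_cons.mp hl).1
    have ht : t.Nodup := (List.nodup_cons.mp hl).2
    have hc : Commute (pp B e f x) ((t.map (pp B e f)).prod) := by
      refine Commute.list_prod_right _ _ fun y hy => ?_
      obtain ⟨j, hj, rfl⟩ := List.mem_map.mp hy
      exact comm_pp_pp B e f he hf hef hfe (fun h => hxt (h ▸ hj))
    simp only [List.map_cons, List.prod_cons, List.length_cons]
    calc pp B e f x * (t.map (pp B e f)).prod * (pp B e f x * (t.map (pp B e f)).prod)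
        = pp B e f x * (pp B e f x * ((t.map (pp B e f)).prod * (t.map (pp B e f)).prod)) := by
          rw [mul_assoc, ← mul_assoc ((t.map (pp B e f)).prod), ← hc.eq,
            mul_assoc (pp B e f x) ((t.map (pp B e f)).prod)]
      _ = ((2 : ℂ) ^ (t.length + 1)) • (pp B e f x * (t.map (pp B e f)).prod) := by
          rw [ih ht, ← mul_assoc, pp_sq B e f he hf hef hfe, mul_smul_comm, smul_mul_assoc,
            smul_smul, pow_succ, mul_comm ((2:ℂ) ^ t.length) 2]

end Pi

section Ctr

lemma ctr_mul (d : Module.Dual ℂ P) (x y : CliffordAlgebra QB) :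
    ctr d (x * y) = ctr d x * y + CliffordAlgebra.involute x * ctr d y := by
  induction x using CliffordAlgebra.induction generalizing y with
  | algebraMap r =>
    rw [CliffordAlgebra.contractLeft_algebraMap_mul, CliffordAlgebra.contractLeft_algebraMap,
      zero_mul, zero_add, CliffordAlgebra.involute.commutes]
  | ι v =>
    rw [CliffordAlgebra.contractLeft_ι_mul, CliffordAlgebra.contractLeft_ι,
      CliffordAlgebra.involute_ι, neg_mul, ← Algebra.smul_def, sub_eq_add_neg]
  | mul a b ha hb =>
    rw [mul_assoc, ha, hb, map_mul (CliffordAlgebra.involute) a b, ha]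
    noncomm_ring
  | add a b ha hb =>
    rw [add_mul, map_add, ha, hb, map_add, map_add, add_mul, add_mul]
    abel

lemma ctr_adjoin (d : Module.Dual ℂ P) (s : Set P) (hd : ∀ w ∈ s, d w = 0)
    {z : CliffordAlgebra QB} (hz : z ∈ Algebra.adjoin ℂ (ιQ '' s)) : ctr d z = 0 := by
  induction hz using Algebra.adjoin_induction with
  | mem x hx =>
    obtain ⟨w, hw, rfl⟩ := hx
    rw [CliffordAlgebra.contractLeft_ι, hd w hw, map_zero]
  | algebraMap r => exact CliffordAlgebra.contractLeft_algebraMap _ _ _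
  | add x y _ _ hx hy => rw [map_add, hx, hy, add_zero]
  | mul x y _ _ hx hy => rw [ctr_mul, hx, hy, zero_mul, mul_zero, add_zero]

variable {p : ℕ} (e f : Fin p → P)

lemma ctr_prodpp_mul (d : Module.Dual ℂ P) (l : List (Fin p))
    (hde : ∀ j ∈ l, d (e j) = 0) (hdf : ∀ j ∈ l, d (f j) = 0) (z : CliffordAlgebra QB) :
    ctr d ((l.map (pp B e f)).prod * z) = (l.map (pp B e f)).prod * ctr d z := by
  induction l generalizing z with
  | nil => simp
  | cons x t ih =>
    simp only [List.map_cons, List.prod_cons]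
    rw [mul_assoc, pp, mul_assoc, CliffordAlgebra.contractLeft_ι_mul,
      CliffordAlgebra.contractLeft_ι_mul,
      ih (fun j hj => hde j (by simp [hj])) (fun j hj => hdf j (by simp [hj])),
      hde x (by simp), hdf x (by simp), zero_smul, zero_smul, zero_sub, zero_sub, mul_neg,
      neg_neg, mul_assoc, mul_assoc]

/-- iterated double contraction -/
noncomputable def Phi (l : List (Fin p)) :
    CliffordAlgebra QB →ₗ[ℂ] CliffordAlgebra QB :=
  l.foldr (fun x g => g ∘ₗ ((ctr (B (e x))).comp (ctr (B (f x))))) LinearMap.id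

lemma Phi_cons (x : Fin p) (t : List (Fin p)) (c : CliffordAlgebra QB) :
    Phi B e f (x :: t) c = Phi B e f t (ctr (B (e x)) (ctr (B (f x)) c)) := rfl

variable (hsB : ∀ x y : P, B x y = B y x)
variable (he : ∀ i j, B (e i) (e j) = 0) (hf : ∀ i j, B (f i) (f j) = 0)
variable (hef : ∀ i j, B (e i) (f j) = if i = j then 1 else 0)

include hsB he hf hef in
lemma Phi_spec (l : List (Fin p)) (hl : l.Nodup) (z : CliffordAlgebra QB)
    (hz : ∀ i : Fin p, ctr (B (e i)) z = 0 ∧ ctr (B (f i)) z = 0) :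
    Phi B e f l ((l.map (pp B e f)).prod * z) = z := by
  have hfe : ∀ i j, B (f i) (e j) = if i = j then 1 else 0 := by
    intro i j; rw [hsB, hef j i]; simp [eq_comm]
  induction l with
  | nil => simp [Phi]
  | cons x t ih =>
    have hxt : x ∉ t := (List.nodup_cons.mp hl).1
    have ht : t.Nodup := (List.nodup_cons.mp hl).2
    rw [Phi_cons]
    have hPtz1 : ctr (B (f x)) ((t.map (pp B e f)).prod * z)
        = (t.map (pp B e f)).prod * ctr (B (f x)) z := by
      refine ctr_prodpp_mul B e f _ t ?_ ?_ z
      · intro j hj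
        have hxj : x ≠ j := fun h => hxt (h ▸ hj)
        rw [hfe x j, if_neg hxj]
      · intro j hj; exact hf x j
    have hPtz2 : ctr (B (e x)) ((t.map (pp B e f)).prod * z)
        = (t.map (pp B e f)).prod * ctr (B (e x)) z := by
      refine ctr_prodpp_mul B e f _ t ?_ ?_ z
      · intro j hj; exact he x j
      · intro j hj
        have hxj : x ≠ j := fun h => hxt (h ▸ hj)
        rw [hef x j, if_neg hxj]
    have step1 : ctr (B (f x)) ((List.map (pp B e f) (x :: t)).prod * z)
        = ιQ (f x) * ((t.map (pp B e f)).prod * z) := by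
      simp only [List.map_cons, List.prod_cons]
      rw [mul_assoc, pp, mul_assoc, CliffordAlgebra.contractLeft_ι_mul,
        CliffordAlgebra.contractLeft_ι_mul, hPtz1, (hz x).2, hfe x x, hf x x]
      simp
    have step2 : ctr (B (e x)) (ιQ (f x) * ((t.map (pp B e f)).prod * z))
        = (t.map (pp B e f)).prod * z := by
      rw [CliffordAlgebra.contractLeft_ι_mul, hPtz2, (hz x).1, hef x x]
      simp
    rw [step1, step2, ih ht]

end Ctr
end Stmt16Aux


open Stmt16Aux in
/-- With `𝔭 = 𝔭⁺ ⊕ 𝔞 ⊕ 𝔭⁻` and `P = (1/2^p) e₁⋯e_p f_p⋯f₁ ∈ Cl(𝔭)` as in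
Statement 15 (`e`, `f` dual isotropic bases of `𝔭⁺`, `𝔭⁻`, and `𝔞` orthogonal to both, with
`B` nondegenerate on `𝔞` and on `𝔭`), the map `a ↦ P a P` restricted to the subalgebra
`Cl(𝔞) ⊆ Cl(𝔭)` generated by `𝔞` is an injective (ℤ₂-graded) algebra homomorphism onto
`P·Cl(𝔞)·P`; in particular `P` commutes with every element of `Cl(𝔞)`, `P a P = a P` for
`a ∈ Cl(𝔞)`, and any Harish-Chandra projection `HC : Cl(𝔭) → Cl(𝔞)` along
`𝔭⁻ Cl(𝔭) + Cl(𝔭) 𝔭⁺` satisfies `HC(a) = a` for `a ∈ Cl(𝔞)`. -/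
theorem stmt16 (P : Type*) [AddCommGroup P] [Module ℂ P] [FiniteDimensional ℂ P]
    (B : LinearMap.BilinForm ℂ P) (hsymm : B.IsSymm) (hnd : B.Nondegenerate)
    (p : ℕ) (e f : Fin p → P) (a : Submodule ℂ P)
    (he : ∀ i j, B (e i) (e j) = 0) (hf : ∀ i j, B (f i) (f j) = 0)
    (hef : ∀ i j, B (e i) (f j) = if i = j then 1 else 0)
    (hae : ∀ x ∈ a, ∀ i, B x (e i) = 0) (haf : ∀ x ∈ a, ∀ i, B x (f i) = 0)
    (hande : ∀ x ∈ a, (∀ y ∈ a, B x y = 0) → x = 0)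
    (hspan : a ⊔ Submodule.span ℂ (Set.range e) ⊔ Submodule.span ℂ (Set.range f) = ⊤)
    (Pw : CliffordAlgebra (LinearMap.BilinMap.toQuadraticMap B))
    (hPw : Pw = ((1 : ℂ) / 2 ^ p) •
      (((List.finRange p).map fun i =>
          CliffordAlgebra.ι (LinearMap.BilinMap.toQuadraticMap B) (e i)).prod *
       ((List.finRange p).reverse.map fun i =>
          CliffordAlgebra.ι (LinearMap.BilinMap.toQuadraticMap B) (f i)).prod))
    (ClA : Subalgebra ℂ (CliffordAlgebra (LinearMap.BilinMap.toQuadraticMap B)))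
    (hClA : ClA = Algebra.adjoin ℂ
      (CliffordAlgebra.ι (LinearMap.BilinMap.toQuadraticMap B) '' (a : Set P)))
    (N : Submodule ℂ (CliffordAlgebra (LinearMap.BilinMap.toQuadraticMap B)))
    (hN : N = Submodule.span ℂ
      ({z | ∃ y ∈ Submodule.span ℂ (Set.range f),
          ∃ c, z = CliffordAlgebra.ι (LinearMap.BilinMap.toQuadraticMap B) y * c} ∪
       {z | ∃ x ∈ Submodule.span ℂ (Set.range e),
          ∃ c, z = c * CliffordAlgebra.ι (LinearMap.BilinMap.toQuadraticMap B) x})) :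
    (∀ x ∈ ClA, Commute Pw x) ∧
    (∀ x ∈ ClA, Pw * x * Pw = x * Pw) ∧
    (∀ x ∈ ClA, ∀ y ∈ ClA, Pw * x * Pw = Pw * y * Pw → x = y) ∧
    (∀ x ∈ ClA, ∀ y ∈ ClA, (Pw * x * Pw) * (Pw * y * Pw) = Pw * (x * y) * Pw) ∧
    (∀ HC : CliffordAlgebra (LinearMap.BilinMap.toQuadraticMap B) →ₗ[ℂ]
        CliffordAlgebra (LinearMap.BilinMap.toQuadraticMap B),
      (∀ x, HC x ∈ ClA) → (∀ x, x - HC x ∈ N) → ∀ x ∈ ClA, HC x = x) := by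
  classical
  have hB : ∀ x y : P, B x y = B y x := fun x y => hsymm.eq x y
  set ι' := CliffordAlgebra.ι (LinearMap.BilinMap.toQuadraticMap B) with hι'
  set l := List.finRange p with hl
  set El := (l.map fun i => ι' (e i)).prod with hEl
  set Fl := (l.reverse.map fun i => ι' (f i)).prod with hFl
  set PP := (l.map (pp B e f)).prod with hPP
  have hnl : l.Nodup := List.nodup_finRange p
  have hfe : ∀ i j, B (f i) (e j) = if i = j then 1 else 0 := by
    intro i j; rw [hB, hef j i]; simp [eq_comm]
  have hEF : El * Fl = PP := EF_eq_prodpp B e f he hf hef hfe l hnl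
  have h2p : ((2 : ℂ) ^ p) ≠ 0 := pow_ne_zero _ two_ne_zero
  -- commutation
  have hcomm : ∀ x ∈ ClA, Commute (El * Fl) x := by
    intro x hx
    rw [hClA] at hx
    rw [hEF]
    induction hx using Algebra.adjoin_induction with
    | mem w hw =>
      obtain ⟨v, hv, rfl⟩ := hw
      refine Commute.list_prod_left _ _ fun y hy => ?_
      obtain ⟨j, hj, rfl⟩ := List.mem_map.mp hy
      exact pi_comm B _ _ _ (by rw [hB]; exact hae v hv j) (hae v hv j)
        (by rw [hB]; exact haf v hv j) (haf v hv j)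
    | algebraMap r => exact (Algebra.commutes r _).symm
    | add x y _ _ hx hy => exact hx.add_right hy
    | mul x y _ _ hx hy => exact hx.mul_right hy
  have hcommP : ∀ x ∈ ClA, Commute Pw x := by
    intro x hx
    rw [hPw]
    exact (hcomm x hx).smul_left _
  -- idempotency
  have hEF2 : (El * Fl) * (El * Fl) = ((2 : ℂ) ^ p) • (El * Fl) := by
    rw [hEF, prodpp_sq B e f he hf hef hfe l hnl, hl, List.length_finRange]
  have hP2 : Pw * Pw = Pw := by
    rw [hPw, smul_mul_assoc, mul_smul_comm, smul_smul, hEF2, smul_smul]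
    congr 1
    field_simp
  -- the stripping operator
  have hΦ : ∀ z ∈ ClA, Phi B e f l ((El * Fl) * z) = z := by
    intro z hz
    rw [hEF]
    refine Phi_spec B e f hB he hf hef l hnl z fun i => ⟨?_, ?_⟩
    · refine ctr_adjoin B _ (a : Set P) (fun w hw => by rw [hB]; exact hae w hw i) ?_
      rw [← hClA]; exact hz
    · refine ctr_adjoin B _ (a : Set P) (fun w hw => by rw [hB]; exact haf w hw i) ?_
      rw [← hClA]; exact hz
  have hz0 : ∀ z ∈ ClA, z * (El * Fl) = 0 → z = 0 := by
    intro z hz h0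
    have h1 := hΦ z hz
    rw [(hcomm z hz).eq, h0, map_zero] at h1
    exact h1.symm
  -- part 2
  have part2 : ∀ x ∈ ClA, Pw * x * Pw = x * Pw := by
    intro x hx
    rw [(hcommP x hx).eq, mul_assoc, hP2]
  refine ⟨hcommP, part2, ?_, ?_, ?_⟩
  · -- injectivity
    intro x hx y hy h
    rw [part2 x hx, part2 y hy] at h
    have h4 : (x - y) * Pw = 0 := by rw [sub_mul, h, sub_self]
    rw [hPw, mul_smul_comm] at h4
    have h5 : (x - y) * (El * Fl) = 0 := by
      rcases smul_eq_zero.mp h4 with hc | h5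
      · exact absurd hc (by simp [h2p])
      · exact h5
    exact sub_eq_zero.mp (hz0 _ (sub_mem hx hy) h5)
  · -- multiplicativity
    intro x hx y hy
    rw [part2 x hx, part2 y hy, part2 _ (mul_mem hx hy)]
    calc (x * Pw) * (y * Pw) = x * ((Pw * y) * Pw) := by
          rw [mul_assoc, ← mul_assoc Pw]
      _ = x * (y * (Pw * Pw)) := by rw [(hcommP y hy).eq, mul_assoc]
      _ = (x * y) * Pw := by rw [hP2, mul_assoc]
  · -- Harish-Chandra projection
    intro HC h1 h2 x hx
    have hzA : x - HC x ∈ ClA := sub_mem hx (h1 x)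
    have hzN : x - HC x ∈ N := h2 x
    set Ψ : CliffordAlgebra (LinearMap.BilinMap.toQuadraticMap B) →ₗ[ℂ]
        CliffordAlgebra (LinearMap.BilinMap.toQuadraticMap B) :=
      (Phi B e f l).comp ((LinearMap.mulLeft ℂ (El * Fl)).comp
        (LinearMap.mulRight ℂ (El * Fl))) with hΨ
    have hEFf : ∀ y ∈ Submodule.span ℂ (Set.range f), (El * Fl) * ι' y = 0 := by
      intro y hy
      have hle : Submodule.span ℂ (Set.range f) ≤
          LinearMap.ker ((LinearMap.mulLeft ℂ (El * Fl)).comp (ι' : P →ₗ[ℂ] _)) := by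
        rw [Submodule.span_le]
        rintro _ ⟨j, rfl⟩
        simp only [SetLike.mem_coe, LinearMap.mem_ker, LinearMap.comp_apply,
          LinearMap.mulLeft_apply]
        have hmem : f j ∈ l.reverse.map f := List.mem_map_of_mem (by simp [hl])
        have h0 : ((l.reverse.map f).map ι').prod * ι' (f j) = 0 :=
          prod_mul_mem_zero B (l.reverse.map f)
            (by intro u hu w hw
                obtain ⟨i, _, rfl⟩ := List.mem_map.mp hu
                obtain ⟨k, _, rfl⟩ := List.mem_map.mp hw
                exact hf i k) hmem
        rw [List.map_map] at h0
        have hFl' : Fl = ((l.reverse.map (ι' ∘ f))).prod := by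
          rw [hFl]; congr 1
        rw [mul_assoc, hFl', h0, mul_zero]
      exact hle hy
    have hEFe : ∀ v ∈ Submodule.span ℂ (Set.range e), ι' v * (El * Fl) = 0 := by
      intro v hv
      have hle : Submodule.span ℂ (Set.range e) ≤
          LinearMap.ker ((LinearMap.mulRight ℂ (El * Fl)).comp (ι' : P →ₗ[ℂ] _)) := by
        rw [Submodule.span_le]
        rintro _ ⟨j, rfl⟩
        simp only [SetLike.mem_coe, LinearMap.mem_ker, LinearMap.comp_apply,
          LinearMap.mulRight_apply]
        have hmem : e j ∈ l.map e := List.mem_map_of_mem (by simp [hl])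
        have h0 : ι' (e j) * ((l.map e).map ι').prod = 0 :=
          mem_mul_prod_zero B (l.map e)
            (by intro u hu w hw
                obtain ⟨i, _, rfl⟩ := List.mem_map.mp hu
                obtain ⟨k, _, rfl⟩ := List.mem_map.mp hw
                exact he i k) hmem
        rw [List.map_map] at h0
        have hEl' : El = ((l.map (ι' ∘ e))).prod := by
          rw [hEl]; congr 1
        rw [← mul_assoc, hEl', h0, zero_mul]
      exact hle hv
    have hΨN : Ψ (x - HC x) = 0 := by
      have hle : N ≤ LinearMap.ker Ψ := by
        rw [hN, Submodule.span_le]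
        rintro w (⟨y, hy, c', rfl⟩ | ⟨v, hv, c', rfl⟩)
        · simp only [SetLike.mem_coe, LinearMap.mem_ker, hΨ, LinearMap.comp_apply,
            LinearMap.mulLeft_apply, LinearMap.mulRight_apply]
          have hassoc : El * Fl * (ι' y * c' * (El * Fl))
              = (El * Fl * ι' y) * (c' * (El * Fl)) := by noncomm_ring
          rw [hassoc, hEFf y hy, zero_mul, map_zero]
        · simp only [SetLike.mem_coe, LinearMap.mem_ker, hΨ, LinearMap.comp_apply,
            LinearMap.mulLeft_apply, LinearMap.mulRight_apply]
          have hassoc : El * Fl * (c' * ι' v * (El * Fl))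
              = (El * Fl * c') * (ι' v * (El * Fl)) := by noncomm_ring
          rw [hassoc, hEFe v hv, mul_zero, map_zero]
      exact hle hzN
    have hΨA : Ψ (x - HC x) = ((2 : ℂ) ^ p) • (x - HC x) := by
      have e1 : Ψ (x - HC x) = Phi B e f l ((El * Fl) * ((x - HC x) * (El * Fl))) := rfl
      rw [e1, ← (hcomm _ hzA).eq, ← mul_assoc, hEF2, smul_mul_assoc, map_smul, hΦ _ hzA]
    rw [hΨN] at hΨA
    have : x - HC x = 0 := by
      rcases smul_eq_zero.mp hΨA.symm with hc | h5
      · exact absurd hc (by simp [h2p])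
      · exact h5
    exact (sub_eq_zero.mp this).symm
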